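/- Let F be an algebraically closed field of characteristic zero and (V, q) a non-degenerate quadratic F-space of even dimension ≥ 4. Let H be a nonzero finite-dimensional F-vector space, θ : Cl(q) → End_F(H) an isomorphism of F-algebras, N ∈ End_F(V) with N^3 = 0, and M ∈ End_F(H) with M^2 = 0, such that θ(ι(N v)) = M ∘ θ(ι v) − θ(ι v) ∘ M for all v ∈ V. Then exactly one of the following holds: (a) N = 0 and M = 0; (b) N ≠ 0, N^2 = 0, rank N = 2, and 4·rank M = dim_F H; (c) N^2 ≠ 0, rank N = 2, rank N^2 = 1, and 2·rank M = dim_F H. -/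

import Mathlib

open Module LinearMap

set_option linter.unusedSectionVars false


section Aux

variable {F H : Type*} [Field F] [AddCommGroup H] [Module F H]

/-- If `a² = 0` and `a b + b a = 1` then `ker a = range a`. -/
lemma aux_ker_eq_range (a b : Module.End F H) (ha : a * a = 0) (hab : a * b + b * a = 1) :
    LinearMap.ker a = LinearMap.range a := by
  ext x
  constructor
  · intro hx
    have hx0 : a x = 0 := hx
    have h1 : a (b x) + b (a x) = x := by
      have := congrFun (congrArg DFunLike.coe hab) x
      simpa [Module.End.mul_apply] using this
    exact ⟨b x, by rw [hx0, map_zero, add_zero] at h1; exact h1⟩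
  · rintro ⟨y, rfl⟩
    have : a (a y) = 0 := by
      have := congrFun (congrArg DFunLike.coe ha) y
      simpa [Module.End.mul_apply] using this
    exact this

variable [FiniteDimensional F H]

lemma aux_comap_finrank (p q : Submodule F H) :
    finrank F ↥(q.comap p.subtype) = finrank F ↥(q ⊓ p) := by
  have h1 : q.comap p.subtype = (q ⊓ p).comap p.subtype := by
    ext x
    simp [Submodule.mem_comap, x.2]
  rw [h1]
  exact (Submodule.comapSubtypeEquivOfLe (inf_le_right : q ⊓ p ≤ p)).finrank_eq

/-- Halving step: if `a² = 0`, `ab + ba = 1` and `a, b` preserve `K`, the kernel of `a`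
inside `K` has half the dimension of `K`. -/
lemma aux_step (K : Submodule F H) (a b : Module.End F H)
    (hKa : ∀ x ∈ K, a x ∈ K) (hKb : ∀ x ∈ K, b x ∈ K)
    (ha : a * a = 0) (hab : a * b + b * a = 1) :
    2 * finrank F ↥(K ⊓ LinearMap.ker a) = finrank F ↥K := by
  let a' : ↥K →ₗ[F] ↥K := a.restrict hKa
  let b' : ↥K →ₗ[F] ↥K := b.restrict hKb
  have ha' : a' * a' = 0 := by
    ext x
    have := congrFun (congrArg DFunLike.coe ha) (x : H)
    simpa [a', Module.End.mul_apply, LinearMap.restrict_apply, Subtype.ext_iff] using this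
  have hab' : a' * b' + b' * a' = 1 := by
    ext x
    have := congrFun (congrArg DFunLike.coe hab) (x : H)
    simpa [a', b', Module.End.mul_apply, LinearMap.restrict_apply, Subtype.ext_iff] using this
  have hker : LinearMap.ker a' = LinearMap.range a' := aux_ker_eq_range a' b' ha' hab'
  have hrn : finrank F ↥(LinearMap.range a') + finrank F ↥(LinearMap.ker a') = finrank F ↥K :=
    LinearMap.finrank_range_add_finrank_ker a'
  have hkr : finrank F ↥(LinearMap.range a') = finrank F ↥(LinearMap.ker a') := by rw [hker]
  have hker2 : LinearMap.ker a' = (LinearMap.ker a).comap K.subtype :=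
    LinearMap.ker_restrict hKa
  have h3 : finrank F ↥(LinearMap.ker a') = finrank F ↥(K ⊓ LinearMap.ker a) := by
    rw [hker2, aux_comap_finrank, inf_comm]
  rw [hkr] at hrn
  omega

end Aux


section Dual

variable {F V : Type*} [Field F] [AddCommGroup V] [Module F V] [FiniteDimensional F V]

/-- Prescribe the values of a nondegenerate bilinear form against an independent family. -/
lemma aux_dual (B : LinearMap.BilinForm F V) (hB : B.Nondegenerate) {ι : Type*} [Fintype ι]
    (v : ι → V) (hv : LinearIndependent F v) (c : ι → F) :
    ∃ x : V, ∀ i, B x (v i) = c i := by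
  let bs : Basis ι F (Submodule.span F (Set.range v)) := Basis.span hv
  let f0 : Submodule.span F (Set.range v) →ₗ[F] F := (bs.constr F) c
  obtain ⟨g, hg⟩ := LinearMap.exists_extend f0
  refine ⟨(B.toDual hB).symm g, fun i => ?_⟩
  have h1 : B ((B.toDual hB).symm g) (v i) = g (v i) :=
    LinearMap.BilinForm.apply_toDual_symm_apply g (v i)
  rw [h1]
  have hmem : v i ∈ Submodule.span F (Set.range v) :=
    Submodule.subset_span (Set.mem_range_self i)
  have h2 : g (v i) = f0 ⟨v i, hmem⟩ := by
    have := congrFun (congrArg DFunLike.coe hg) ⟨v i, hmem⟩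
    simpa using this
  have h3 : (⟨v i, hmem⟩ : Submodule.span F (Set.range v)) = bs i :=
    (Basis.span_apply hv i).symm
  rw [h2, h3]
  exact bs.constr_basis F c i

lemma aux_indep (p : Submodule F V) (k : ℕ) (hk : k ≤ finrank F ↥p) :
    ∃ u : Fin k → V, LinearIndependent F u ∧ ∀ i, u i ∈ p := by
  let b := Module.finBasis F ↥p
  refine ⟨fun i => ↑(b (Fin.castLE hk i)), ?_, fun i => (b (Fin.castLE hk i)).2⟩
  have h1 : LinearIndependent F (fun j => ↑(b j) : Fin (finrank F ↥p) → V) :=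
    b.linearIndependent.map' p.subtype p.ker_subtype
  exact h1.comp (Fin.castLE hk) (Fin.castLE_injective hk)

end Dual


section Hyper

variable {F V : Type*} [Field F] [CharZero F] [AddCommGroup V] [Module F V]
  [FiniteDimensional F V]

lemma aux_isotropic_of_polar_self (Q : QuadraticForm F V) (x : V)
    (h : QuadraticMap.polar Q x x = 0) : Q x = 0 := by
  have h1 : QuadraticMap.polar Q x x = 2 • Q x := QuadraticMap.polar_self Q x
  rw [h, two_nsmul] at h1
  exact add_self_eq_zero.mp h1.symm

/-- Build a family of hyperbolic partners for a totally isotropic independent family. -/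
lemma aux_hyper (Q : QuadraticForm F V)
    (hQ : LinearMap.BilinForm.Nondegenerate (QuadraticMap.polarBilin Q))
    {k : ℕ} (u : Fin k → V) (hu : LinearIndependent F u)
    (hiso : ∀ i j, QuadraticMap.polar Q (u i) (u j) = 0)
    {m : ℕ} (hm : m ≤ k) :
    ∃ w : Fin m → V, (∀ j, Q (w j) = 0) ∧
      (∀ (i : Fin k) (j : Fin m),
        QuadraticMap.polar Q (u i) (w j) = if (i : ℕ) = (j : ℕ) then 1 else 0) ∧
      (∀ j j', QuadraticMap.polar Q (w j) (w j') = 0) := by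
  induction m with
  | zero => exact ⟨Fin.elim0, fun j => j.elim0, fun i j => j.elim0, fun j => j.elim0⟩
  | succ m ih =>
    obtain ⟨w, hwQ, hwu, hww⟩ := ih (Nat.le_of_succ_le hm)
    have hmk : m < k := hm
    -- the combined family is independent
    set vv : Fin k ⊕ Fin m → V := Sum.elim u w with hvv
    have hvv_indep : LinearIndependent F vv := by
      rw [Fintype.linearIndependent_iff]
      intro g hg
      -- first kill the `inr` coefficients by pairing with `u`
      have hinr : ∀ j : Fin m, g (Sum.inr j) = 0 := by
        intro j
        have hj : (j : ℕ) < k := lt_of_lt_of_le j.2 (Nat.le_of_succ_le hm)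
        let i : Fin k := ⟨j, hj⟩
        have happ := congrArg (fun z => QuadraticMap.polarBilin Q (u i) z) hg
        simp only [map_sum, _root_.map_smul, map_zero] at happ
        rw [Fintype.sum_sum_type] at happ
        simp only [hvv, Sum.elim_inl, Sum.elim_inr, QuadraticMap.polarBilin_apply_apply,
          smul_eq_mul] at happ
        have h1 : ∀ i' : Fin k, g (Sum.inl i') * QuadraticMap.polar Q (u i) (u i') = 0 := by
          intro i'; rw [hiso i i', mul_zero]
        have h2 : ∀ j' : Fin m, g (Sum.inr j') * QuadraticMap.polar Q (u i) (w j') =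
            if j' = j then g (Sum.inr j) else 0 := by
          intro j'
          rw [hwu i j']
          by_cases hjj : j' = j
          · subst hjj; simp [i]
          · have : ¬ ((i : ℕ) = (j' : ℕ)) := by
              simp only [i]
              exact fun hc => hjj (Fin.ext (by omega))
            simp [this, hjj]
        rw [Finset.sum_congr rfl (fun i' _ => h1 i'), Finset.sum_congr rfl (fun j' _ => h2 j')]
          at happ
        simpa using happ
      -- then the `inl` coefficients vanish by independence of `u`
      have hg2 : ∑ i : Fin k, g (Sum.inl i) • u i = 0 := by
        rw [Fintype.sum_sum_type] at hg
        have : ∑ j : Fin m, g (Sum.inr j) • vv (Sum.inr j) = 0 := by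
          apply Finset.sum_eq_zero
          intro j _
          rw [hinr j, zero_smul]
        rw [this, add_zero] at hg
        exact hg
      have hinl := Fintype.linearIndependent_iff.mp hu (fun i => g (Sum.inl i)) hg2
      rintro (i | j)
      · exact hinl i
      · exact hinr j
    -- find x pairing correctly with everything
    obtain ⟨x, hx⟩ := aux_dual (QuadraticMap.polarBilin Q) hQ vv hvv_indep
      (Sum.elim (fun i => if (i : ℕ) = m then 1 else 0) (fun _ => 0))
    have hxu : ∀ i : Fin k, QuadraticMap.polar Q x (u i) = if (i : ℕ) = m then 1 else 0 := by
      intro i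
      have := hx (Sum.inl i)
      simpa [hvv, QuadraticMap.polarBilin_apply_apply] using this
    have hxw : ∀ j : Fin m, QuadraticMap.polar Q x (w j) = 0 := by
      intro j
      have := hx (Sum.inr j)
      simpa [hvv, QuadraticMap.polarBilin_apply_apply] using this
    set um : V := u ⟨m, hmk⟩ with hum
    have hQum : Q um = 0 := aux_isotropic_of_polar_self Q um (hiso _ _)
    have hxum : QuadraticMap.polar Q x um = 1 := by
      rw [hum, hxu]; simp
    set wm : V := x + (-(Q x)) • um with hwm
    have hQwm : Q wm = 0 := by
      rw [hwm]
      rw [QuadraticMap.map_add (⇑Q) x ((-(Q x)) • um)]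
      rw [QuadraticMap.map_smul Q (-(Q x)) um, QuadraticMap.polar_smul_right, hxum, hQum]
      simp
    have hu_wm : ∀ i : Fin k, QuadraticMap.polar Q (u i) wm = if (i : ℕ) = m then 1 else 0 := by
      intro i
      rw [hwm, QuadraticMap.polar_add_right, QuadraticMap.polar_smul_right,
        QuadraticMap.polar_comm Q (u i) x, hxu i, hum, hiso]
      simp
    have hw_wm : ∀ j : Fin m, QuadraticMap.polar Q (w j) wm = 0 := by
      intro j
      rw [hwm, QuadraticMap.polar_add_right, QuadraticMap.polar_smul_right,
        QuadraticMap.polar_comm Q (w j) x, hxw j, hum,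
        QuadraticMap.polar_comm Q (w j) (u _), hwu]
      have : ¬ ((m : ℕ) = (j : ℕ)) := by omega
      simp [this]
    have hwm_wm : QuadraticMap.polar Q wm wm = 0 := by
      have := QuadraticMap.polar_self Q wm
      rw [hQwm] at this
      simpa using this
    refine ⟨Fin.snoc w wm, ?_, ?_, ?_⟩
    · intro j
      refine Fin.lastCases ?_ ?_ j
      · rw [Fin.snoc_last]; exact hQwm
      · intro j0; rw [Fin.snoc_castSucc]; exact hwQ j0
    · intro i j
      refine Fin.lastCases ?_ ?_ j
      · rw [Fin.snoc_last]
        rw [hu_wm i]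
        simp [Fin.last]
      · intro j0
        rw [Fin.snoc_castSucc]
        rw [hwu i j0]
        simp [Fin.coe_castSucc]
    · intro j j'
      refine Fin.lastCases ?_ ?_ j
      · refine Fin.lastCases ?_ ?_ j'
        · rw [Fin.snoc_last]; exact hwm_wm
        · intro j0
          rw [Fin.snoc_last, Fin.snoc_castSucc]
          rw [QuadraticMap.polar_comm]
          exact hw_wm j0
      · intro j0
        refine Fin.lastCases ?_ ?_ j'
        · rw [Fin.snoc_last, Fin.snoc_castSucc]
          exact hw_wm j0
        · intro j0'
          rw [Fin.snoc_castSucc, Fin.snoc_castSucc]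
          exact hww j0 j0'

end Hyper

set_option maxHeartbeats 1000000

/-- trichotomy for a square-zero-commutator pair `(N, M)` acting through a
Clifford algebra identification `Cl(q) ≃ End(H)`, for a non-degenerate quadratic space of
even dimension ≥ 4 over an algebraically closed field of characteristic zero. -/
theorem stmt4 {F V H : Type*} [Field F] [IsAlgClosed F] [CharZero F]
    [AddCommGroup V] [Module F V] [FiniteDimensional F V]
    [AddCommGroup H] [Module F H] [FiniteDimensional F H] [Nontrivial H]
    (Q : QuadraticForm F V)
    (hQ : LinearMap.BilinForm.Nondegenerate (QuadraticMap.polarBilin Q))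
    (heven : Even (Module.finrank F V)) (hdim : 4 ≤ Module.finrank F V)
    (θ : CliffordAlgebra Q ≃ₐ[F] Module.End F H)
    (N : Module.End F V) (hN3 : N ^ 3 = 0)
    (M : Module.End F H) (hM2 : M ^ 2 = 0)
    (hcomp : ∀ v : V, θ (CliffordAlgebra.ι Q (N v)) =
      M * θ (CliffordAlgebra.ι Q v) - θ (CliffordAlgebra.ι Q v) * M) :
    (N = 0 ∧ M = 0) ∨
    (N ≠ 0 ∧ N ^ 2 = 0 ∧ Module.finrank F (LinearMap.range N) = 2 ∧
      4 * Module.finrank F (LinearMap.range M) = Module.finrank F H) ∨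
    (N ^ 2 ≠ 0 ∧ Module.finrank F (LinearMap.range N) = 2 ∧
      Module.finrank F (LinearMap.range (N ^ 2)) = 1 ∧
      2 * Module.finrank F (LinearMap.range M) = Module.finrank F H) := by
  classical
  set Φ : V → Module.End F H := fun v => θ (CliffordAlgebra.ι Q v) with hΦdef
  set d : ℕ := Module.finrank F H with hdH
  have hd1 : 0 < d := Module.finrank_pos
  -- ## basic scalar helpers
  have hsc : ∀ c : F, c • (1 : Module.End F H) = 0 → c = 0 := by
    intro c h
    obtain ⟨x, hx⟩ := exists_ne (0 : H)
    have h2 : c • x = 0 := by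
      have := congrFun (congrArg DFunLike.coe h) x
      simpa using this
    rcases smul_eq_zero.mp h2 with h3 | h3
    · exact h3
    · exact absurd h3 hx
  have hx2 : ∀ x : Module.End F H, x + x = 0 → x = 0 := by
    intro x h
    have h2 : (2 : F) • x = 0 := by rw [two_smul]; exact h
    rcases smul_eq_zero.mp h2 with h3 | h3
    · exact absurd h3 two_ne_zero
    · exact h3
  -- ## Clifford relations transported to End H
  have h1mul : ∀ v w : V, Φ v * Φ w + Φ w * Φ v =
      QuadraticMap.polar Q v w • (1 : Module.End F H) := by
    intro v w
    have h := congrArg θ (CliffordAlgebra.ι_mul_ι_add_swap (Q := Q) v w)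
    rw [map_add, map_mul, map_mul, AlgEquiv.commutes] at h
    rw [Algebra.algebraMap_eq_smul_one] at h
    exact h
  have hsq : ∀ v : V, Φ v * Φ v = Q v • (1 : Module.End F H) := by
    intro v
    have h := congrArg θ (CliffordAlgebra.ι_sq_scalar Q v)
    rw [map_mul, AlgEquiv.commutes, Algebra.algebraMap_eq_smul_one] at h
    exact h
  have hΦ0 : Φ 0 = 0 := by
    show θ (CliffordAlgebra.ι Q 0) = 0
    rw [map_zero, map_zero]
  have hΦN : ∀ v : V, Φ (N v) = M * Φ v - Φ v * M := fun v => hcomp v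
  have hMM : M * M = 0 := by rw [← pow_two]; exact hM2
  have hp2 : ∀ v : V, (N ^ 2) v = N (N v) := by
    intro v; rw [pow_two]; rfl
  have hp3 : ∀ v : V, N (N (N v)) = 0 := by
    intro v
    have h := congrFun (congrArg DFunLike.coe hN3) v
    rw [pow_succ, pow_two] at h
    simpa [Module.End.mul_apply] using h
  -- ## skew-adjointness of N
  have hskew : ∀ v w : V, QuadraticMap.polar Q (N v) w = - QuadraticMap.polar Q v (N w) := by
    intro v w
    have e1 : (QuadraticMap.polar Q (N v) w + QuadraticMap.polar Q v (N w)) •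
        (1 : Module.End F H) = 0 := by
      rw [add_smul, ← h1mul (N v) w, ← h1mul v (N w), hΦN v, hΦN w]
      have hc : ((M * Φ v - Φ v * M) * Φ w + Φ w * (M * Φ v - Φ v * M)) +
          (Φ v * (M * Φ w - Φ w * M) + (M * Φ w - Φ w * M) * Φ v)
          = M * (Φ v * Φ w + Φ w * Φ v) - (Φ v * Φ w + Φ w * Φ v) * M := by noncomm_ring
      rw [hc, h1mul v w, smul_mul_assoc, mul_smul_comm, one_mul, mul_one, sub_self]
    have h2 := hsc _ e1
    linear_combination h2
  have hBNvv : ∀ v : V, QuadraticMap.polar Q (N v) v = 0 := by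
    intro v
    have h1 := hskew v v
    have h2 : QuadraticMap.polar Q v (N v) = QuadraticMap.polar Q (N v) v :=
      QuadraticMap.polar_comm _ _ _
    rw [h2] at h1
    linear_combination h1 / 2
  -- ## key operator identities
  have hE1 : ∀ v : V, Φ (N (N v)) = -(M * Φ v * M) - M * Φ v * M := by
    intro v
    rw [hΦN (N v), hΦN v]
    have hexp : M * (M * Φ v - Φ v * M) - (M * Φ v - Φ v * M) * M
        = M * M * Φ v - M * Φ v * M - M * Φ v * M + Φ v * (M * M) := by noncomm_ring
    rw [hexp, hMM]
    noncomm_ring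
  have hE2 : ∀ v : V, M * Φ (N v) + M * Φ (N v) = Φ (N (N v)) := by
    intro v
    rw [hΦN v, hE1 v]
    have hexp : M * (M * Φ v - Φ v * M) + M * (M * Φ v - Φ v * M)
        = M * M * Φ v + M * M * Φ v - M * Φ v * M - M * Φ v * M := by noncomm_ring
    rw [hexp, hMM]
    noncomm_ring
  have hE2' : ∀ v : V, Φ (N v) * M + Φ (N v) * M = - Φ (N (N v)) := by
    intro v
    rw [hΦN v, hE1 v]
    have hexp : (M * Φ v - Φ v * M) * M + (M * Φ v - Φ v * M) * M
        = M * Φ v * M + M * Φ v * M - Φ v * (M * M) - Φ v * (M * M) := by noncomm_ring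
    rw [hexp, hMM]
    noncomm_ring
  have hE3 : ∀ u : V, u ∈ LinearMap.range N → N u = 0 → Φ u * M = 0 ∧ M * Φ u = 0 := by
    rintro u ⟨v, rfl⟩ hu
    have h0 : Φ (N (N v)) = 0 := by rw [hu]; exact hΦ0
    constructor
    · apply hx2
      rw [hE2' v, h0, neg_zero]
    · apply hx2
      rw [hE2 v, h0]
  have hMΦNN : ∀ v : V, M * Φ (N (N v)) = 0 ∧ Φ (N (N v)) * M = 0 := by
    intro v
    constructor
    · apply hx2
      rw [hE2 (N v), hp3 v, hΦ0]
    · apply hx2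
      rw [hE2' (N v), hp3 v, hΦ0, neg_zero]
  -- products of two `Φ` of images of `N²` are multiples of `M`
  have hE5 : ∀ vu vw : V, Φ (N (N vw)) * Φ (N (N vu)) =
      (QuadraticMap.polar Q (N vw) (N (N vu)) + QuadraticMap.polar Q (N vw) (N (N vu))) • M := by
    intro vu vw
    set c : F := QuadraticMap.polar Q (N vw) (N (N vu)) with hc
    have l3 : Φ (N vw) * Φ (N (N vu)) =
        c • (1 : Module.End F H) - Φ (N (N vu)) * Φ (N vw) :=
      eq_sub_of_add_eq (h1mul _ _)
    have s2 : M * Φ (N vw) * Φ (N vu) * M + M * Φ (N vw) * Φ (N vu) * M = -(c • M) := by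
      calc M * Φ (N vw) * Φ (N vu) * M + M * Φ (N vw) * Φ (N vu) * M
          = M * Φ (N vw) * (Φ (N vu) * M + Φ (N vu) * M) := by noncomm_ring
        _ = -(M * (Φ (N vw) * Φ (N (N vu)))) := by rw [hE2' vu]; noncomm_ring
        _ = -(c • M - M * Φ (N (N vu)) * Φ (N vw)) := by
              rw [l3, mul_sub, mul_smul_comm, mul_one, mul_assoc]
        _ = -(c • M) := by rw [(hMΦNN vu).1, zero_mul, sub_zero]
    have l5 : Φ (N (N vw)) = M * Φ (N vw) + M * Φ (N vw) := (hE2 vw).symm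
    have l6 : Φ (N (N vu)) = -(Φ (N vu) * M + Φ (N vu) * M) := by
      rw [hE2' vu, neg_neg]
    calc Φ (N (N vw)) * Φ (N (N vu))
        = (M * Φ (N vw) + M * Φ (N vw)) * -(Φ (N vu) * M + Φ (N vu) * M) := by rw [← l5, ← l6]
      _ = -((M * Φ (N vw) * Φ (N vu) * M + M * Φ (N vw) * Φ (N vu) * M) +
            (M * Φ (N vw) * Φ (N vu) * M + M * Φ (N vw) * Φ (N vu) * M)) := by noncomm_ring
      _ = -(-(c • M) + -(c • M)) := by rw [s2]
      _ = c • M + c • M := by rw [← neg_add, neg_neg]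
      _ = (c + c) • M := (add_smul c c M).symm
  -- the range of `N²` is totally isotropic
  have hE6 : ∀ vu vw : V, QuadraticMap.polar Q (N (N vw)) (N (N vu)) = 0 := by
    intro vu vw
    have h := h1mul (N (N vw)) (N (N vu))
    rw [hE5 vu vw, hE5 vw vu] at h
    have hc12 : QuadraticMap.polar Q (N vu) (N (N vw)) =
        - QuadraticMap.polar Q (N vw) (N (N vu)) := by
      have h1 := hskew (N vw) (N vu)
      have h2 : QuadraticMap.polar Q (N vu) (N (N vw)) =
          QuadraticMap.polar Q (N (N vw)) (N vu) := QuadraticMap.polar_comm _ _ _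
      rw [h2, h1]
    rw [hc12] at h
    have hz : (QuadraticMap.polar Q (N vw) (N (N vu)) + QuadraticMap.polar Q (N vw) (N (N vu))) • M
        + (-QuadraticMap.polar Q (N vw) (N (N vu)) + -QuadraticMap.polar Q (N vw) (N (N vu))) • M
        = (0 : Module.End F H) := by
      rw [← add_smul]
      have : (QuadraticMap.polar Q (N vw) (N (N vu)) + QuadraticMap.polar Q (N vw) (N (N vu))) +
          (-QuadraticMap.polar Q (N vw) (N (N vu)) + -QuadraticMap.polar Q (N vw) (N (N vu))) = 0 := by
        ring
      rw [this, zero_smul]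
    rw [hz] at h
    exact (hsc _ h.symm)
  -- ## partners and rank of isotropic Clifford generators
  have hQiso : ∀ e : V, QuadraticMap.polar Q e e = 0 → Q e = 0 :=
    fun e he => aux_isotropic_of_polar_self Q e he
  have hpartner : ∀ e : V, Q e = 0 → e ≠ 0 → ∃ e' : V, Q e' = 0 ∧
      QuadraticMap.polar Q e e' = 1 := by
    intro e hQe he
    have hu : LinearIndependent F (fun _ : Fin 1 => e) := by
      rw [Fintype.linearIndependent_iff]
      intro g hg i
      have h2 : g 0 • e = 0 := by simpa using hg
      rcases smul_eq_zero.mp h2 with h3 | h3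
      · fin_cases i; exact h3
      · exact absurd h3 he
    have hiso : ∀ i j : Fin 1, QuadraticMap.polar Q e e = 0 := by
      intro _ _
      have := QuadraticMap.polar_self Q e
      rw [hQe] at this
      simpa using this
    obtain ⟨w, hwQ, hwu, -⟩ := aux_hyper Q hQ (fun _ : Fin 1 => e) hu
      (fun i j => hiso i j) (le_refl 1)
    refine ⟨w 0, hwQ 0, ?_⟩
    have := hwu 0 0
    simpa using this
  have hrk_iso : ∀ e : V, Q e = 0 → e ≠ 0 →
      2 * finrank F ↥(LinearMap.range (Φ e)) = d := by
    intro e hQe he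
    obtain ⟨e', hQ', hB'⟩ := hpartner e hQe he
    have ha : Φ e * Φ e = 0 := by rw [hsq e, hQe, zero_smul]
    have hab : Φ e * Φ e' + Φ e' * Φ e = 1 := by rw [h1mul, hB', one_smul]
    have hker := aux_ker_eq_range (Φ e) (Φ e') ha hab
    have hrn := LinearMap.finrank_range_add_finrank_ker (Φ e)
    rw [hker] at hrn
    omega
  -- anticommuting maps preserve kernels
  have hanti : ∀ e g : V, QuadraticMap.polar Q e g = 0 →
      ∀ x : H, Φ e x = 0 → Φ e (Φ g x) = 0 := by
    intro e g heg x hx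
    have h := congrFun (congrArg DFunLike.coe (h1mul e g)) x
    simp only [LinearMap.add_apply, Module.End.mul_apply, LinearMap.smul_apply,
      Module.End.one_apply, hx, map_zero, heg, zero_smul, add_zero] at h
    simpa using h
  -- dimension of iterated kernels
  have hchain2 : ∀ e0 e1 f0 f1 : V, Q e0 = 0 → Q e1 = 0 →
      QuadraticMap.polar Q e0 e1 = 0 →
      QuadraticMap.polar Q e0 f0 = 1 → QuadraticMap.polar Q e1 f1 = 1 →
      QuadraticMap.polar Q e0 f1 = 0 → QuadraticMap.polar Q e1 f0 = 0 →
      4 * finrank F ↥(LinearMap.ker (Φ e0) ⊓ LinearMap.ker (Φ e1)) = d := by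
    intro e0 e1 f0 f1 hq0 hq1 h01 hb00 hb11 hb01 hb10
    have ha0 : Φ e0 * Φ e0 = 0 := by rw [hsq, hq0, zero_smul]
    have ha1 : Φ e1 * Φ e1 = 0 := by rw [hsq, hq1, zero_smul]
    have hab0 : Φ e0 * Φ f0 + Φ f0 * Φ e0 = 1 := by rw [h1mul, hb00, one_smul]
    have hab1 : Φ e1 * Φ f1 + Φ f1 * Φ e1 = 1 := by rw [h1mul, hb11, one_smul]
    have st1 := aux_step (⊤ : Submodule F H) (Φ e0) (Φ f0)
      (fun x _ => Submodule.mem_top) (fun x _ => Submodule.mem_top) ha0 hab0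
    rw [top_inf_eq, finrank_top] at st1
    have st2 := aux_step (LinearMap.ker (Φ e0)) (Φ e1) (Φ f1)
      (fun x hx => by
        rw [LinearMap.mem_ker] at hx ⊢
        exact hanti e0 e1 h01 x hx)
      (fun x hx => by
        rw [LinearMap.mem_ker] at hx ⊢
        exact hanti e0 f1 hb01 x hx) ha1 hab1
    omega
  have hchain3 : ∀ e0 e1 e2 f0 f1 f2 : V, Q e0 = 0 → Q e1 = 0 → Q e2 = 0 →
      QuadraticMap.polar Q e0 e1 = 0 → QuadraticMap.polar Q e0 e2 = 0 →
      QuadraticMap.polar Q e1 e2 = 0 →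
      QuadraticMap.polar Q e0 f0 = 1 → QuadraticMap.polar Q e1 f1 = 1 →
      QuadraticMap.polar Q e2 f2 = 1 →
      QuadraticMap.polar Q e0 f1 = 0 → QuadraticMap.polar Q e0 f2 = 0 →
      QuadraticMap.polar Q e1 f0 = 0 → QuadraticMap.polar Q e1 f2 = 0 →
      QuadraticMap.polar Q e2 f0 = 0 → QuadraticMap.polar Q e2 f1 = 0 →
      8 * finrank F ↥(LinearMap.ker (Φ e0) ⊓ LinearMap.ker (Φ e1) ⊓ LinearMap.ker (Φ e2)) = d := by
    intro e0 e1 e2 f0 f1 f2 hq0 hq1 hq2 h01 h02 h12 hb00 hb11 hb22 hb01 hb02 hb10 hb12 hb20 hb21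
    have ha2 : Φ e2 * Φ e2 = 0 := by rw [hsq, hq2, zero_smul]
    have hab2 : Φ e2 * Φ f2 + Φ f2 * Φ e2 = 1 := by rw [h1mul, hb22, one_smul]
    have hc2 := hchain2 e0 e1 f0 f1 hq0 hq1 h01 hb00 hb11 hb01 hb10
    have st3 := aux_step (LinearMap.ker (Φ e0) ⊓ LinearMap.ker (Φ e1)) (Φ e2) (Φ f2)
      (fun x hx => by
        rcases Submodule.mem_inf.mp hx with ⟨hx0, hx1⟩
        rw [LinearMap.mem_ker] at hx0 hx1
        exact Submodule.mem_inf.mpr ⟨LinearMap.mem_ker.mpr (hanti e0 e2 h02 x hx0),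
          LinearMap.mem_ker.mpr (hanti e1 e2 h12 x hx1)⟩)
      (fun x hx => by
        rcases Submodule.mem_inf.mp hx with ⟨hx0, hx1⟩
        rw [LinearMap.mem_ker] at hx0 hx1
        exact Submodule.mem_inf.mpr ⟨LinearMap.mem_ker.mpr (hanti e0 f2 hb02 x hx0),
          LinearMap.mem_ker.mpr (hanti e1 f2 hb12 x hx1)⟩) ha2 hab2
    omega
  -- rank subadditivity helpers
  have hrank_mul_left : ∀ X : Module.End F H,
      finrank F ↥(LinearMap.range (M * X)) ≤ finrank F ↥(LinearMap.range M) := by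
    intro X
    rw [Module.End.mul_eq_comp]
    exact Submodule.finrank_mono (LinearMap.range_comp_le_range X M)
  have hrank_mul_right : ∀ X : Module.End F H,
      finrank F ↥(LinearMap.range (X * M)) ≤ finrank F ↥(LinearMap.range M) := by
    intro X
    rw [Module.End.mul_eq_comp, LinearMap.range_comp]
    exact Submodule.finrank_map_le X (LinearMap.range M)
  have hrank_sub : ∀ A B : Module.End F H, finrank F ↥(LinearMap.range (A - B)) ≤
      finrank F ↥(LinearMap.range A) + finrank F ↥(LinearMap.range B) := by
    intro A B
    have hle : LinearMap.range (A - B) ≤ LinearMap.range A ⊔ LinearMap.range B := by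
      rintro _ ⟨y, rfl⟩
      exact Submodule.mem_sup.mpr ⟨A y, ⟨y, rfl⟩, -(B y), ⟨-y, by rw [map_neg]⟩, by
        simp [LinearMap.sub_apply, sub_eq_add_neg]⟩
    have h1 := Submodule.finrank_mono hle
    have h2 := Submodule.finrank_sup_add_finrank_inf_eq (LinearMap.range A) (LinearMap.range B)
    omega
  -- ## trivial case : M = 0
  by_cases hM0 : M = 0
  · left
    have hNz : N = 0 := by
      ext v
      have hall : ∀ w : V, QuadraticMap.polarBilin Q (N v) w = 0 := by
        intro w
        have hΦNv : Φ (N v) = 0 := by rw [hΦN v, hM0]; simp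
        have h := h1mul (N v) w
        rw [hΦNv, zero_mul, mul_zero, add_zero] at h
        have h2 := hsc _ h.symm
        simpa [QuadraticMap.polarBilin_apply_apply] using h2
      have := hQ.1 (N v) hall
      simpa using this
    exact ⟨hNz, hM0⟩
  -- ## if N = 0 then M is central, hence zero : contradiction
  have hNne : N ≠ 0 := by
    intro hN0
    have hMcomm : ∀ v : V, M * Φ v = Φ v * M := by
      intro v
      have h := hΦN v
      rw [hN0] at h
      simp only [LinearMap.zero_apply] at h
      rw [hΦ0] at h
      exact sub_eq_zero.mp h.symm
    set t := θ.symm M with ht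
    have htι : ∀ v : V, t * CliffordAlgebra.ι Q v = CliffordAlgebra.ι Q v * t := by
      intro v
      apply θ.injective
      rw [map_mul, map_mul, AlgEquiv.apply_symm_apply]
      exact hMcomm v
    have hall : ∀ x : CliffordAlgebra Q, t * x = x * t := by
      intro x
      induction x using CliffordAlgebra.induction with
      | algebraMap r => exact (Algebra.commutes r t).symm
      | ι v => exact htι v
      | mul a b ha hb => rw [← mul_assoc, ha, mul_assoc, hb, mul_assoc]
      | add a b ha hb => rw [mul_add, ha, hb, add_mul]
    have hSM : ∀ S : Module.End F H, M * S = S * M := by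
      intro S
      have h := congrArg θ (hall (θ.symm S))
      rw [map_mul, map_mul, AlgEquiv.apply_symm_apply, AlgEquiv.apply_symm_apply] at h
      exact h
    obtain ⟨x0, hx0⟩ := exists_ne (0 : H)
    have hξ : ∃ ξ : Module.Dual F H, ξ x0 ≠ 0 := by
      by_contra hcon
      push_neg at hcon
      exact hx0 ((Module.forall_dual_apply_eq_zero_iff F x0).mp hcon)
    obtain ⟨ξ, hξ0⟩ := hξ
    have hMy : ∀ y : H, ξ x0 • M y = ξ (M x0) • y := by
      intro y
      have h := congrFun (congrArg DFunLike.coe (hSM (ξ.smulRight y))) x0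
      simp only [Module.End.mul_apply, LinearMap.smulRight_apply] at h
      rw [map_smul] at h
      exact h
    set c : F := (ξ x0)⁻¹ * ξ (M x0) with hcdef
    have hMc : M = c • (1 : Module.End F H) := by
      ext y
      have h := hMy y
      have h2 : M y = (ξ x0)⁻¹ • (ξ (M x0) • y) := by
        rw [← h, smul_smul, inv_mul_cancel₀ hξ0, one_smul]
      rw [h2]
      simp [hcdef, smul_smul, LinearMap.smul_apply]
    have hMM0 : M * M = (c * c) • (1 : Module.End F H) := by
      rw [hMc, smul_mul_assoc, one_mul, smul_smul]
    have hcc : c * c = 0 := hsc _ (by rw [← hMM0, hMM])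
    have hc0 : c = 0 := by
      rcases mul_eq_zero.mp hcc with h | h <;> exact h
    exact hM0 (by rw [hMc, hc0, zero_smul])
  -- ## the rank of N is never 1
  have hE4 : ∀ u u' : V, u ∈ LinearMap.range N → u' ∈ LinearMap.range N → N u = 0 → N u' = 0 →
      QuadraticMap.polar Q u u' = 0 := by
    intro u u' h1 h1' h2 h2'
    have ha := (hE3 u h1 h2).1
    have hb := (hE3 u' h1' h2').1
    have h5 : (Φ u * Φ u' + Φ u' * Φ u) * M = QuadraticMap.polar Q u u' • M := by
      rw [h1mul, smul_mul_assoc, one_mul]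
    rw [add_mul, mul_assoc, mul_assoc, ha, hb, mul_zero, mul_zero, add_zero] at h5
    rcases smul_eq_zero.mp h5.symm with h | h
    · exact h
    · exact absurd h hM0
  have hrkN1 : finrank F ↥(LinearMap.range N) ≠ 1 := by
    intro h1
    have hv1 : ∃ v, N v ≠ 0 := by
      by_contra hc
      push_neg at hc
      exact hNne (by ext v; simp [hc v])
    obtain ⟨v1, hv1⟩ := hv1
    have hu0 : N v1 ≠ 0 := hv1
    have hspan : Submodule.span F {N v1} = LinearMap.range N := by
      apply Submodule.eq_of_le_of_finrank_le
      · rw [Submodule.span_singleton_le_iff_mem]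
        exact ⟨v1, rfl⟩
      · rw [h1, finrank_span_singleton hu0]
    have hmem : ∀ v : V, ∃ c : F, N v = c • N v1 := by
      intro v
      have : N v ∈ Submodule.span F {N v1} := by rw [hspan]; exact ⟨v, rfl⟩
      obtain ⟨c, hc⟩ := Submodule.mem_span_singleton.mp this
      exact ⟨c, hc.symm⟩
    have hv2 : ∃ v2, QuadraticMap.polar Q (N v1) v2 ≠ 0 := by
      by_contra hc
      push_neg at hc
      exact hu0 (hQ.1 (N v1) (fun w => by
        simpa [QuadraticMap.polarBilin_apply_apply] using hc w))
    obtain ⟨v2, hv2⟩ := hv2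
    have hBv1 : QuadraticMap.polar Q (N v1) v1 = 0 := hBNvv v1
    obtain ⟨c2, hc2⟩ := hmem v2
    have hc20 : c2 = 0 := by
      have h := hBNvv v2
      rw [hc2, QuadraticMap.polar_smul_left] at h
      rcases smul_eq_zero.mp h with h | h
      · exact h
      · exact absurd h hv2
    have hNv2 : N v2 = 0 := by rw [hc2, hc20, zero_smul]
    have hfin := hBNvv (v1 + v2)
    rw [map_add, hNv2, add_zero, QuadraticMap.polar_add_right, hBv1, zero_add] at hfin
    exact hv2 hfin
  -- ## main dichotomy on N²
  by_cases hN2 : N ^ 2 = 0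
  · -- ### case (b)
    right; left
    have hNN : ∀ v : V, N (N v) = 0 := by
      intro v
      rw [← hp2 v, hN2]
      rfl
    have hNu0 : ∀ u : V, u ∈ LinearMap.range N → N u = 0 := by
      rintro u ⟨v, rfl⟩
      exact hNN v
    have hUprop : ∀ u : V, u ∈ LinearMap.range N → Φ u * M = 0 ∧ M * Φ u = 0 :=
      fun u hu => hE3 u hu (hNu0 u hu)
    have hBU : ∀ u u' : V, u ∈ LinearMap.range N → u' ∈ LinearMap.range N →
        QuadraticMap.polar Q u u' = 0 :=
      fun u u' hu hu' => hE4 u u' hu hu' (hNu0 u hu) (hNu0 u' hu')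
    have hQU : ∀ u : V, u ∈ LinearMap.range N → Q u = 0 :=
      fun u hu => hQiso u (hBU u u hu hu)
    have hge1 : finrank F ↥(LinearMap.range N) ≠ 0 := by
      intro h
      exact hNne (LinearMap.range_eq_bot.mp (Submodule.finrank_eq_zero.mp h))
    -- the lower bound d ≤ 4 rank M, given a nonzero element of range N
    have hlow : ∀ u0 : V, u0 ∈ LinearMap.range N → u0 ≠ 0 →
        d ≤ 4 * finrank F ↥(LinearMap.range M) := by
      intro u0 hu0 hu0n
      have h1 := hrk_iso u0 (hQU u0 hu0) hu0n
      obtain ⟨v0, hv0⟩ := hu0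
      have hΦu0 : Φ u0 = M * Φ v0 - Φ v0 * M := by rw [← hv0]; exact hΦN v0
      have h2 : finrank F ↥(LinearMap.range (Φ u0)) ≤
          finrank F ↥(LinearMap.range (M * Φ v0)) + finrank F ↥(LinearMap.range (Φ v0 * M)) := by
        rw [hΦu0]
        exact hrank_sub _ _
      have h3 := hrank_mul_left (Φ v0)
      have h4 := hrank_mul_right (Φ v0)
      omega
    have hle2 : finrank F ↥(LinearMap.range N) ≤ 2 := by
      by_contra h3
      push_neg at h3
      obtain ⟨u, hui, humem⟩ := aux_indep (LinearMap.range N) 3 (by omega)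
      have hBu : ∀ i j : Fin 3, QuadraticMap.polar Q (u i) (u j) = 0 :=
        fun i j => hBU (u i) (u j) (humem i) (humem j)
      obtain ⟨w, hwQ, hwu, hww⟩ := aux_hyper Q hQ u hui hBu (le_refl 3)
      have hch := hchain3 (u 0) (u 1) (u 2) (w 0) (w 1) (w 2)
        (hQU _ (humem 0)) (hQU _ (humem 1)) (hQU _ (humem 2))
        (hBu 0 1) (hBu 0 2) (hBu 1 2)
        (by simpa using hwu 0 0) (by simpa using hwu 1 1) (by simpa using hwu 2 2)
        (by simpa using hwu 0 1) (by simpa using hwu 0 2) (by simpa using hwu 1 0)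
        (by simpa using hwu 1 2) (by simpa using hwu 2 0) (by simpa using hwu 2 1)
      have hrangeM : LinearMap.range M ≤
          LinearMap.ker (Φ (u 0)) ⊓ LinearMap.ker (Φ (u 1)) ⊓ LinearMap.ker (Φ (u 2)) := by
        rintro _ ⟨y, rfl⟩
        have hk : ∀ i : Fin 3, Φ (u i) (M y) = 0 := by
          intro i
          have := congrFun (congrArg DFunLike.coe (hUprop (u i) (humem i)).1) y
          simpa [Module.End.mul_apply] using this
        exact Submodule.mem_inf.mpr ⟨Submodule.mem_inf.mpr
          ⟨LinearMap.mem_ker.mpr (hk 0), LinearMap.mem_ker.mpr (hk 1)⟩,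
          LinearMap.mem_ker.mpr (hk 2)⟩
      have hrM := Submodule.finrank_mono hrangeM
      have hlb := hlow (u 0) (humem 0) (hui.ne_zero 0)
      omega
    have hU2 : finrank F ↥(LinearMap.range N) = 2 := by omega
    refine ⟨hNne, hN2, hU2, ?_⟩
    obtain ⟨u, hui, humem⟩ := aux_indep (LinearMap.range N) 2 (by omega)
    have hBu : ∀ i j : Fin 2, QuadraticMap.polar Q (u i) (u j) = 0 :=
      fun i j => hBU (u i) (u j) (humem i) (humem j)
    obtain ⟨w, hwQ, hwu, hww⟩ := aux_hyper Q hQ u hui hBu (le_refl 2)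
    have hch := hchain2 (u 0) (u 1) (w 0) (w 1)
      (hQU _ (humem 0)) (hQU _ (humem 1)) (hBu 0 1)
      (by simpa using hwu 0 0) (by simpa using hwu 1 1)
      (by simpa using hwu 0 1) (by simpa using hwu 1 0)
    have hrangeM : LinearMap.range M ≤ LinearMap.ker (Φ (u 0)) ⊓ LinearMap.ker (Φ (u 1)) := by
      rintro _ ⟨y, rfl⟩
      have hk : ∀ i : Fin 2, Φ (u i) (M y) = 0 := by
        intro i
        have := congrFun (congrArg DFunLike.coe (hUprop (u i) (humem i)).1) y
        simpa [Module.End.mul_apply] using this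
      exact Submodule.mem_inf.mpr ⟨LinearMap.mem_ker.mpr (hk 0), LinearMap.mem_ker.mpr (hk 1)⟩
    have hrM := Submodule.finrank_mono hrangeM
    have hlb := hlow (u 0) (humem 0) (hui.ne_zero 0)
    omega
  · -- ### case (c)
    right; right
    have hv0 : ∃ v0, N (N v0) ≠ 0 := by
      by_contra hc
      push_neg at hc
      refine hN2 ?_
      ext v
      rw [hp2 v, hc v]
      rfl
    obtain ⟨v0, hv00⟩ := hv0
    -- rank M is half the dimension
    have h2M : 2 * finrank F ↥(LinearMap.range M) = d := by
      have hup : LinearMap.range M ≤ LinearMap.ker M := by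
        rintro _ ⟨y, rfl⟩
        rw [LinearMap.mem_ker]
        have := congrFun (congrArg DFunLike.coe hMM) y
        simpa [Module.End.mul_apply] using this
      have hrn := LinearMap.finrank_range_add_finrank_ker M
      have hup2 := Submodule.finrank_mono hup
      have hQu0 : Q (N (N v0)) = 0 := hQiso _ (hE6 v0 v0)
      have h1 := hrk_iso (N (N v0)) hQu0 hv00
      have hfac : Φ (N (N v0)) = M * (-(Φ v0 * M) - Φ v0 * M) := by
        rw [hE1 v0]; noncomm_ring
      have h2 : finrank F ↥(LinearMap.range (Φ (N (N v0)))) ≤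
          finrank F ↥(LinearMap.range M) := by
        rw [hfac]; exact hrank_mul_left _
      omega
    -- rank of N² equals 1
    have hW1 : finrank F ↥(LinearMap.range (N ^ 2)) = 1 := by
      have hWn0 : finrank F ↥(LinearMap.range (N ^ 2)) ≠ 0 := by
        intro h
        exact hN2 (LinearMap.range_eq_bot.mp (Submodule.finrank_eq_zero.mp h))
      have hWle : finrank F ↥(LinearMap.range (N ^ 2)) ≤ 1 := by
        by_contra hc
        push_neg at hc
        obtain ⟨x, hxi, hxmem⟩ := aux_indep (LinearMap.range (N ^ 2)) 2 (by omega)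
        have hrep : ∀ i : Fin 2, ∃ v : V, N (N v) = x i := by
          intro i
          obtain ⟨v, hv⟩ := hxmem i
          exact ⟨v, by rw [← hp2 v]; exact hv⟩
        obtain ⟨vx, hvx⟩ := hrep 0
        obtain ⟨vy, hvy⟩ := hrep 1
        have hBxy : ∀ i j : Fin 2, QuadraticMap.polar Q (x i) (x j) = 0 := by
          intro i j
          obtain ⟨vi, hvi⟩ := hrep i
          obtain ⟨vj, hvj⟩ := hrep j
          rw [← hvi, ← hvj]
          exact hE6 vj vi
        have hQx : ∀ i : Fin 2, Q (x i) = 0 := fun i => hQiso _ (hBxy i i)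
        obtain ⟨w, hwQ, hwu, hww⟩ := aux_hyper Q hQ x hxi hBxy (le_refl 2)
        have hch := hchain2 (x 0) (x 1) (w 0) (w 1) (hQx 0) (hQx 1) (hBxy 0 1)
          (by simpa using hwu 0 0) (by simpa using hwu 1 1)
          (by simpa using hwu 0 1) (by simpa using hwu 1 0)
        have hb00 : QuadraticMap.polar Q (x 0) (w 0) = 1 := by simpa using hwu 0 0
        have hb11 : QuadraticMap.polar Q (x 1) (w 1) = 1 := by simpa using hwu 1 1
        have hker_le : LinearMap.ker (Φ (x 0)) ⊓ LinearMap.ker (Φ (x 1)) ≤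
            LinearMap.range (Φ (x 0) * Φ (x 1)) := by
          intro z hz
          rcases Submodule.mem_inf.mp hz with ⟨hz0, hz1⟩
          rw [LinearMap.mem_ker] at hz0 hz1
          have h1z : Φ (x 0) (Φ (w 0) z) = z := by
            have h := congrFun (congrArg DFunLike.coe (h1mul (x 0) (w 0))) z
            simp only [LinearMap.add_apply, Module.End.mul_apply, LinearMap.smul_apply,
              Module.End.one_apply, hz0, map_zero, hb00, one_smul, add_zero] at h
            exact h
          have hz1' : Φ (x 1) (Φ (w 0) z) = 0 :=
            hanti (x 1) (w 0) (by simpa using hwu 1 0) z hz1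
          have h2z : Φ (x 1) (Φ (w 1) (Φ (w 0) z)) = Φ (w 0) z := by
            have h := congrFun (congrArg DFunLike.coe (h1mul (x 1) (w 1))) (Φ (w 0) z)
            simp only [LinearMap.add_apply, Module.End.mul_apply, LinearMap.smul_apply,
              Module.End.one_apply, hz1', map_zero, hb11, one_smul, add_zero] at h
            exact h
          refine ⟨Φ (w 1) (Φ (w 0) z), ?_⟩
          show Φ (x 0) (Φ (x 1) (Φ (w 1) (Φ (w 0) z))) = z
          rw [h2z, h1z]
        have hE5xy := hE5 vy vx
        rw [hvx, hvy] at hE5xy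
        set c : F := QuadraticMap.polar Q (N vx) (x 1) with hcdef
        by_cases hc0 : c + c = 0
        · rw [hc0, zero_smul] at hE5xy
          have hbot : LinearMap.ker (Φ (x 0)) ⊓ LinearMap.ker (Φ (x 1)) ≤ ⊥ := by
            rw [← LinearMap.range_eq_bot.mpr hE5xy]
            exact hker_le
          have h0 : finrank F ↥(LinearMap.ker (Φ (x 0)) ⊓ LinearMap.ker (Φ (x 1))) = 0 := by
            rw [Submodule.finrank_eq_zero.mpr (le_bot_iff.mp hbot)]
          omega
        · have hrange_eq : LinearMap.range (Φ (x 0) * Φ (x 1)) = LinearMap.range M := by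
            rw [hE5xy]
            exact LinearMap.range_smul M (c + c) hc0
          have hsq0 : ∀ z : H, Φ (x 0) (Φ (x 0) z) = 0 := by
            intro z
            have h := congrFun (congrArg DFunLike.coe (hsq (x 0))) z
            rw [hQx 0] at h
            simpa [Module.End.mul_apply] using h
          have hsq1 : ∀ z : H, Φ (x 1) (Φ (x 1) z) = 0 := by
            intro z
            have h := congrFun (congrArg DFunLike.coe (hsq (x 1))) z
            rw [hQx 1] at h
            simpa [Module.End.mul_apply] using h
          have hsub : LinearMap.range (Φ (x 0) * Φ (x 1)) ≤
              LinearMap.ker (Φ (x 0)) ⊓ LinearMap.ker (Φ (x 1)) := by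
            rintro _ ⟨y, rfl⟩
            refine Submodule.mem_inf.mpr ⟨LinearMap.mem_ker.mpr ?_, LinearMap.mem_ker.mpr ?_⟩
            · show Φ (x 0) ((Φ (x 0) * Φ (x 1)) y) = 0
              rw [Module.End.mul_apply]
              exact hsq0 (Φ (x 1) y)
            · show Φ (x 1) ((Φ (x 0) * Φ (x 1)) y) = 0
              rw [Module.End.mul_apply]
              exact hanti (x 1) (x 0) (hBxy 1 0) (Φ (x 1) y) (hsq1 y)
          have hrM2 : finrank F ↥(LinearMap.range M) ≤
              finrank F ↥(LinearMap.ker (Φ (x 0)) ⊓ LinearMap.ker (Φ (x 1))) := by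
            rw [← hrange_eq]
            exact Submodule.finrank_mono hsub
          omega
      omega
    -- rank of N equals 2
    have hUne0 : finrank F ↥(LinearMap.range N) ≠ 0 := by
      intro h
      exact hNne (LinearMap.range_eq_bot.mp (Submodule.finrank_eq_zero.mp h))
    have hUle : finrank F ↥(LinearMap.range N) ≤ 2 := by
      by_contra hcu
      push_neg at hcu
      -- the kernel of N inside range N has dimension ≥ 2
      set f : ↥(LinearMap.range N) →ₗ[F] V := N.domRestrict (LinearMap.range N) with hfdef
      have hrnf := LinearMap.finrank_range_add_finrank_ker f
      have hrangef : finrank F ↥(LinearMap.range f) = 1 := by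
        have h1 : LinearMap.range f = Submodule.map N (LinearMap.range N) :=
          LinearMap.range_domRestrict _ _
        have h2 : Submodule.map N (LinearMap.range N) = LinearMap.range (N ^ 2) := by
          rw [pow_two, Module.End.mul_eq_comp, LinearMap.range_comp]
        rw [h1, h2]
        exact hW1
      have hkerf : finrank F ↥(LinearMap.ker f) =
          finrank F ↥(LinearMap.ker N ⊓ LinearMap.range N) := by
        rw [hfdef, LinearMap.ker_domRestrict]
        exact aux_comap_finrank _ _
      have hdim2 : 2 ≤ finrank F ↥(LinearMap.ker N ⊓ LinearMap.range N) := by omega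
      obtain ⟨u, hui, humem⟩ := aux_indep (LinearMap.ker N ⊓ LinearMap.range N) 2 hdim2
      have hmemr : ∀ i : Fin 2, u i ∈ LinearMap.range N :=
        fun i => (Submodule.mem_inf.mp (humem i)).2
      have hmemk : ∀ i : Fin 2, N (u i) = 0 :=
        fun i => LinearMap.mem_ker.mp (Submodule.mem_inf.mp (humem i)).1
      have hBu : ∀ i j : Fin 2, QuadraticMap.polar Q (u i) (u j) = 0 :=
        fun i j => hE4 (u i) (u j) (hmemr i) (hmemr j) (hmemk i) (hmemk j)
      have hQu : ∀ i : Fin 2, Q (u i) = 0 := fun i => hQiso _ (hBu i i)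
      obtain ⟨w, hwQ, hwu, hww⟩ := aux_hyper Q hQ u hui hBu (le_refl 2)
      have hch := hchain2 (u 0) (u 1) (w 0) (w 1) (hQu 0) (hQu 1) (hBu 0 1)
        (by simpa using hwu 0 0) (by simpa using hwu 1 1)
        (by simpa using hwu 0 1) (by simpa using hwu 1 0)
      have hrangeM : LinearMap.range M ≤
          LinearMap.ker (Φ (u 0)) ⊓ LinearMap.ker (Φ (u 1)) := by
        rintro _ ⟨y, rfl⟩
        have hk : ∀ i : Fin 2, Φ (u i) (M y) = 0 := by
          intro i
          have h := (hE3 (u i) (hmemr i) (hmemk i)).1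
          have := congrFun (congrArg DFunLike.coe h) y
          simpa [Module.End.mul_apply] using this
        exact Submodule.mem_inf.mpr ⟨LinearMap.mem_ker.mpr (hk 0), LinearMap.mem_ker.mpr (hk 1)⟩
      have hrM := Submodule.finrank_mono hrangeM
      omega
    have hU2 : finrank F ↥(LinearMap.range N) = 2 := by
      have := hrkN1
      omega
    exact ⟨hN2, hU2, hW1, h2M⟩
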